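/- arXiv:1507.05181 — 2 statements merged into one kernel-verified Lean document; each statement's English description precedes it below -/
import Mathlib

section
/- Let Z be a real-valued random variable that is almost surely positive (P(Z > 0) = 1) and possesses the lack of memory property: for all s ≥ 0 and t ≥ 0, P(Z - t > s | Z > t) = P(Z > s). Then there exists λ > 0 such that Z is exponentially distributed with rate λ; equivalently, P(Z > z) = e^{-λz} for all z ≥ 0. -/
open MeasureTheory ProbabilityTheory Real

/-- The exponential distribution is the unique memoryless distribution on the positive reals:
if `Z` is a real random variable with `P(Z > 0) = 1` satisfying the lack of memory property
`P(Z - t > s | Z > t) = P(Z > s)` for all `s, t ≥ 0`, then there is a rate `λ > 0` such that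
`Z ~ Exp(λ)`; equivalently, `P(Z > z) = e^{-λ z}` for all `z ≥ 0`. -/
theorem memoryless_is_exponential
    {Ω : Type*} [MeasureSpace Ω] [IsProbabilityMeasure (ℙ : Measure Ω)]
    (Z : Ω → ℝ) (hZ : Measurable Z)
    (hpos : ℙ {ω | Z ω > 0} = 1)
    (hmem : ∀ s ≥ (0 : ℝ), ∀ t ≥ (0 : ℝ),
      ℙ[|{ω | Z ω > t}] {ω | Z ω - t > s} = ℙ {ω | Z ω > s}) :
    ∃ lam > (0 : ℝ), Measure.map Z ℙ = expMeasure lam ∧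
      ∀ z ≥ (0 : ℝ), ℙ {ω | Z ω > z} = ENNReal.ofReal (Real.exp (-lam * z)) := by
  classical
  have hBmeas : ∀ t : ℝ, MeasurableSet {ω | Z ω > t} := fun t => hZ measurableSet_Ioi
  set G : ℝ → ENNReal := fun t => ℙ {ω | Z ω > t} with hGdef
  have hGtop : ∀ t, G t ≠ ⊤ := fun t => measure_ne_top _ _
  have hGle : ∀ t, G t ≤ 1 := fun t => prob_le_one
  have hG0 : G 0 = 1 := hpos
  have hGanti : ∀ s t : ℝ, s ≤ t → G t ≤ G s := by
    intro s t hst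
    exact measure_mono (fun ω hω => lt_of_le_of_lt hst hω)
  -- G never vanishes on [0, ∞)
  have hne : ∀ t : ℝ, 0 ≤ t → G t ≠ 0 := by
    intro t ht h0
    have h := hmem 0 le_rfl t ht
    rw [cond_apply (hBmeas t)] at h
    have hz : ℙ ({ω | Z ω > t} ∩ {ω | Z ω - t > 0}) = 0 :=
      measure_mono_null Set.inter_subset_left h0
    rw [hz, mul_zero] at h
    exact zero_ne_one (h.trans hG0)
  -- multiplicativity
  have hmul : ∀ s : ℝ, 0 ≤ s → ∀ t : ℝ, 0 ≤ t → G (s + t) = G t * G s := by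
    intro s hs t ht
    have h := hmem s hs t ht
    rw [cond_apply (hBmeas t)] at h
    have hset : {ω | Z ω > t} ∩ {ω | Z ω - t > s} = {ω | Z ω > s + t} := by
      ext ω
      simp only [Set.mem_inter_iff, Set.mem_setOf_eq]
      constructor
      · rintro ⟨_, h2⟩; linarith
      · intro h1; constructor <;> linarith
    rw [hset] at h
    calc G (s + t) = G t * ((G t)⁻¹ * G (s + t)) := by
          rw [← mul_assoc, ENNReal.mul_inv_cancel (hne t ht) (hGtop t), one_mul]
      _ = G t * G s := by rw [h]
  -- real survival function
  set F : ℝ → ℝ := fun t => (G t).toReal with hFdef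
  have hFpos : ∀ t : ℝ, 0 ≤ t → 0 < F t := by
    intro t ht
    exact ENNReal.toReal_pos (hne t ht) (hGtop t)
  have hFle : ∀ t : ℝ, F t ≤ 1 := by
    intro t
    exact ENNReal.toReal_le_of_le_ofReal zero_le_one (by simpa using hGle t)
  have hF0 : F 0 = 1 := by simp [hFdef, hG0]
  have hFmul : ∀ s : ℝ, 0 ≤ s → ∀ t : ℝ, 0 ≤ t → F (s + t) = F t * F s := by
    intro s hs t ht
    simp [hFdef, hmul s hs t ht, ENNReal.toReal_mul]
  have hFanti : ∀ s t : ℝ, 0 ≤ s → s ≤ t → F t ≤ F s := by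
    intro s t hs hst
    exact ENNReal.toReal_le_toReal (hGtop t) (hGtop s) |>.mpr (hGanti s t hst)
  -- F is eventually < 1
  have hlt1 : ∃ n : ℕ, F n < 1 := by
    by_contra hcon
    push_neg at hcon
    have hall : ∀ n : ℕ, ℙ {ω | Z ω ≤ (n : ℝ)} = 0 := by
      intro n
      have h1 : G n = 1 := by
        have := hcon n
        have h2 : F n = 1 := le_antisymm (hFle n) this
        have : G n = ENNReal.ofReal (F n) := (ENNReal.ofReal_toReal (hGtop n)).symm
        rw [this, h2]; simp
      have hc : {ω | Z ω ≤ (n : ℝ)} = {ω | Z ω > (n : ℝ)}ᶜ := by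
        ext ω; simp [not_lt]
      rw [hc, prob_compl_eq_zero_iff (hBmeas n)]
      exact h1
    have huniv : (Set.univ : Set Ω) = ⋃ n : ℕ, {ω | Z ω ≤ (n : ℝ)} := by
      ext ω
      simp only [Set.mem_univ, Set.mem_iUnion, Set.mem_setOf_eq, true_iff]
      exact exists_nat_ge (Z ω)
    have : ℙ (Set.univ : Set Ω) = 0 := by
      rw [huniv]
      exact measure_iUnion_null hall
    rw [measure_univ] at this
    exact one_ne_zero this
  -- F 1 < 1
  have hFpow : ∀ n : ℕ, ∀ x : ℝ, 0 ≤ x → F (n * x) = F x ^ n := by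
    intro n
    induction n with
    | zero => intro x hx; simpa using hF0
    | succ n ih =>
      intro x hx
      have : ((n : ℝ) + 1) * x = x + (n : ℝ) * x := by ring
      rw [Nat.cast_succ, this, hFmul x hx ((n : ℝ) * x) (by positivity), ih x hx, pow_succ]
  have hF1lt : F 1 < 1 := by
    obtain ⟨n, hn⟩ := hlt1
    by_contra hcon
    push_neg at hcon
    have h1 : F 1 = 1 := le_antisymm (hFle 1) hcon
    have : F (n : ℝ) = 1 := by
      have := hFpow n 1 zero_le_one
      rw [mul_one] at this
      rw [this, h1, one_pow]
    linarith
  have hF1pos : 0 < F 1 := hFpos 1 zero_le_one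
  set lam : ℝ := -Real.log (F 1) with hlamdef
  have hlam : 0 < lam := by
    have := Real.log_neg hF1pos hF1lt
    simp [hlamdef]; linarith
  -- log survival
  set g : ℝ → ℝ := fun t => Real.log (F t) with hgdef
  have hg1 : g 1 = -lam := by simp [hgdef, hlamdef]
  have hgadd : ∀ s : ℝ, 0 ≤ s → ∀ t : ℝ, 0 ≤ t → g (s + t) = g s + g t := by
    intro s hs t ht
    simp only [hgdef]
    rw [hFmul s hs t ht, Real.log_mul (ne_of_gt (hFpos t ht)) (ne_of_gt (hFpos s hs))]
    ring
  have hganti : ∀ s t : ℝ, 0 ≤ s → s ≤ t → g t ≤ g s := by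
    intro s t hs hst
    exact Real.log_le_log (hFpos t (hs.trans hst)) (hFanti s t hs hst)
  have hg0 : g 0 = 0 := by simp [hgdef, hF0]
  -- g (n * x) = n * g x
  have hgnat : ∀ n : ℕ, ∀ x : ℝ, 0 ≤ x → g ((n : ℝ) * x) = n * g x := by
    intro n x hx
    simp only [hgdef]
    rw [hFpow n x hx, Real.log_pow]
  -- g q = q * g 1 for nonneg rationals
  have hgrat : ∀ q : ℚ, 0 ≤ q → g (q : ℝ) = (q : ℝ) * g 1 := by
    intro q hq
    have hd : 0 < (q.den : ℝ) := by positivity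
    have hnum : (0 : ℤ) ≤ q.num := Rat.num_nonneg.mpr hq
    obtain ⟨m, hm⟩ := Int.eq_ofNat_of_zero_le hnum
    have hqval : (q : ℝ) = (m : ℝ) / (q.den : ℝ) := by
      rw [Rat.cast_def, hm]
      push_cast
      ring
    have key : (q.den : ℝ) * g (q : ℝ) = (q.den : ℝ) * ((q : ℝ) * g 1) := by
      have h1 : g ((q.den : ℝ) * (q : ℝ)) = q.den * g (q : ℝ) := hgnat q.den (q : ℝ) (by exact_mod_cast hq)
      have h2 : (q.den : ℝ) * (q : ℝ) = (m : ℝ) * 1 := by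
        rw [hqval]; field_simp
      have h3 : g ((m : ℝ) * 1) = m * g 1 := hgnat m 1 zero_le_one
      have h4 : (q.den : ℝ) * ((q : ℝ) * g 1) = (m : ℝ) * g 1 := by
        rw [hqval]; field_simp
      rw [← h1, h2, h3, h4]
    exact mul_left_cancel₀ (ne_of_gt hd) key
  -- g t = -lam * t for t ≥ 0
  have hgval : ∀ t : ℝ, 0 ≤ t → g t = -lam * t := by
    intro t ht
    rcases eq_or_lt_of_le ht with h | h
    · rw [← h, hg0]; ring
    have hub : g t ≤ -lam * t := by
      refine le_of_forall_pos_le_add ?_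
      intro ε hε
      have hlt : max (t - ε / lam) 0 < t := by
        apply max_lt _ h
        have : 0 < ε / lam := div_pos hε hlam
        linarith
      obtain ⟨q, hq1, hq2⟩ := exists_rat_btwn hlt
      have hq0 : (0:ℝ) ≤ (q:ℝ) := le_of_lt (lt_of_le_of_lt (le_max_right _ _) hq1)
      have hqq : 0 ≤ q := by exact_mod_cast hq0
      have h1 : g t ≤ g q := hganti q t hq0 (le_of_lt hq2)
      have h2 : g (q : ℝ) = (q : ℝ) * g 1 := hgrat q hqq
      rw [hg1] at h2
      have h3 : t - ε / lam < (q : ℝ) := lt_of_le_of_lt (le_max_left _ _) hq1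
      have hdiv : ε / lam * lam = ε := div_mul_cancel₀ ε (ne_of_gt hlam)
      have hml := mul_lt_mul_of_pos_right h3 hlam
      have : (q : ℝ) * (-lam) ≤ -lam * t + ε := by nlinarith [hml, hdiv]
      linarith [h1, h2.le]
    have hlb : -lam * t ≤ g t := by
      refine le_of_forall_pos_le_add ?_
      intro ε hε
      have hlt : t < t + ε / lam := by
        have : 0 < ε / lam := div_pos hε hlam
        linarith
      obtain ⟨q, hq1, hq2⟩ := exists_rat_btwn hlt
      have hq0 : (0:ℝ) ≤ (q:ℝ) := le_of_lt (lt_of_le_of_lt ht hq1)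
      have hqq : 0 ≤ q := by exact_mod_cast hq0
      have h1 : g (q : ℝ) ≤ g t := hganti t q ht (le_of_lt hq1)
      have h2 : g (q : ℝ) = (q : ℝ) * g 1 := hgrat q hqq
      rw [hg1] at h2
      have hdiv : ε / lam * lam = ε := div_mul_cancel₀ ε (ne_of_gt hlam)
      have hml := mul_lt_mul_of_pos_right hq2 hlam
      have : -lam * t ≤ (q : ℝ) * (-lam) + ε := by nlinarith [hml, hdiv]
      linarith [h1, h2.ge]
    linarith
  -- survival function formula
  have hsurv : ∀ z : ℝ, 0 ≤ z → ℙ {ω | Z ω > z} = ENNReal.ofReal (Real.exp (-lam * z)) := by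
    intro z hz
    have hF : F z = Real.exp (-lam * z) := by
      have hgz := hgval z hz
      simp only [hgdef] at hgz
      rw [← Real.exp_log (hFpos z hz), hgz]
    have : G z = ENNReal.ofReal (F z) := (ENNReal.ofReal_toReal (hGtop z)).symm
    rw [hGdef] at this
    simp only at this
    rw [this, hF]
  refine ⟨lam, hlam, ?_, hsurv⟩
  -- the map measure is the exponential measure
  have hmap : IsProbabilityMeasure (Measure.map Z ℙ) := Measure.isProbabilityMeasure_map hZ.aemeasurable
  have hle0 : ℙ {ω | Z ω ≤ 0} = 0 := by
    have hc : {ω | Z ω ≤ (0:ℝ)} = {ω | Z ω > (0:ℝ)}ᶜ := by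
      ext ω; simp [not_lt]
    rw [hc, prob_compl_eq_zero_iff (hBmeas 0)]
    exact hpos
  refine Measure.ext_of_Iic _ _ (fun a => ?_)
  rw [Measure.map_apply hZ measurableSet_Iic]
  have hpdf : expMeasure lam (Set.Iic a) = ∫⁻ x in Set.Iic a, exponentialPDF lam x := by
    rw [expMeasure, gammaMeasure, withDensity_apply _ measurableSet_Iic]
    rfl
  rw [hpdf, lintegral_exponentialPDF_eq_antiDeriv hlam a]
  by_cases ha : 0 ≤ a
  · rw [if_pos ha]
    have hpre : Z ⁻¹' Set.Iic a = {ω | Z ω > a}ᶜ := by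
      ext ω; simp [not_lt]
    rw [hpre, prob_compl_eq_one_sub (hBmeas a), hsurv a ha]
    rw [← ENNReal.ofReal_one, ← ENNReal.ofReal_sub _ (Real.exp_nonneg _)]
    congr 1
    ring_nf
  · rw [if_neg ha]
    push_neg at ha
    have hsub : Z ⁻¹' Set.Iic a ⊆ {ω | Z ω ≤ 0} := by
      intro ω hω
      simp only [Set.mem_preimage, Set.mem_Iic] at hω
      simp only [Set.mem_setOf_eq]
      linarith
    simp only [ENNReal.ofReal_zero]
    exact measure_mono_null hsub hle0
end

section
/- (Inverse of a submatrix) Let A ∈ ℝ^{n×n} be invertible, let 1 ≤ i ≤ n, and let Ã be the matrix obtained from A by deleting its i-th row and i-th column. Let E be the submatrix of A⁻¹ obtained by deleting its i-th row and i-th column, let f be the i-th column of A⁻¹ with its i-th entry removed, let g be the i-th row of A⁻¹ with its i-th entry removed, and let h be the (i,i) entry of A⁻¹. If h ≠ 0 then Ã is invertible and Ã⁻¹ = E − f gᵀ / h. -/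
open Matrix

/-- Inverse of a submatrix: let `A` be invertible, and let `Ã` be obtained from `A` by
deleting its `i`-th row and column. Let `E` be `A⁻¹` with its `i`-th row and column deleted,
`f` the `i`-th column of `A⁻¹` without its `i`-th entry, `g` the `i`-th row of `A⁻¹` without
its `i`-th entry, and `h` the `(i, i)` entry of `A⁻¹`. If `h ≠ 0` then `Ã` is invertible
and `Ã⁻¹ = E − f gᵀ / h`. -/
theorem inverse_of_submatrix {n : ℕ}
    (A : Matrix (Fin (n + 1)) (Fin (n + 1)) ℝ) (hA : IsUnit A.det)
    (i : Fin (n + 1))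
    (E : Matrix (Fin n) (Fin n) ℝ) (f g : Fin n → ℝ) (h : ℝ)
    (hE : E = A⁻¹.submatrix i.succAbove i.succAbove)
    (hf : f = fun j => A⁻¹ (i.succAbove j) i)
    (hg : g = fun j => A⁻¹ i (i.succAbove j))
    (hh : h = A⁻¹ i i)
    (hne : h ≠ 0) :
    IsUnit (A.submatrix i.succAbove i.succAbove : Matrix (Fin n) (Fin n) ℝ).det ∧
    (A.submatrix i.succAbove i.succAbove : Matrix (Fin n) (Fin n) ℝ)⁻¹
      = E - h⁻¹ • vecMulVec f g := by
  have hAB : A * A⁻¹ = 1 := Matrix.mul_nonsing_inv A hA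
  set B := A⁻¹ with hB
  have key : (A.submatrix i.succAbove i.succAbove) * (E - h⁻¹ • vecMulVec f g) = 1 := by
    ext j k
    have h1 : ∀ m, ∑ x : Fin (n+1), A (i.succAbove j) x * B x m
        = (1 : Matrix (Fin (n+1)) (Fin (n+1)) ℝ) (i.succAbove j) m := by
      intro m; rw [← Matrix.mul_apply, hAB]
    have h2 := h1 (i.succAbove k)
    have h3 := h1 i
    rw [Fin.sum_univ_succAbove _ i] at h2 h3
    have hik : (1 : Matrix (Fin (n+1)) (Fin (n+1)) ℝ) (i.succAbove j) (i.succAbove k)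
        = (1 : Matrix (Fin n) (Fin n) ℝ) j k := by
      simp [Matrix.one_apply, Fin.succAbove_right_injective.eq_iff]
    have hii : (1 : Matrix (Fin (n+1)) (Fin (n+1)) ℝ) (i.succAbove j) i = 0 := by
      simp [Matrix.one_apply, Fin.succAbove_ne]
    rw [hik] at h2
    rw [hii] at h3
    simp only [Matrix.mul_apply, Matrix.sub_apply, Matrix.submatrix_apply,
      Matrix.smul_apply, vecMulVec_apply, smul_eq_mul, hE, hf, hg, hh]
    simp only [mul_sub]
    rw [Finset.sum_sub_distrib]
    have e3 : ∑ x : Fin n, A (i.succAbove j) (i.succAbove x) * B (i.succAbove x) i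
        = - (A (i.succAbove j) i * B i i) := by linarith [h3]
    have : ∑ x : Fin n, A (i.succAbove j) (i.succAbove x)
        * ((B i i)⁻¹ * (B (i.succAbove x) i * B i (i.succAbove k)))
        = - (A (i.succAbove j) i * B i (i.succAbove k)) := by
      have := hne; rw [hh] at this
      calc ∑ x : Fin n, A (i.succAbove j) (i.succAbove x)
            * ((B i i)⁻¹ * (B (i.succAbove x) i * B i (i.succAbove k)))
          = (B i i)⁻¹ * B i (i.succAbove k) *
            ∑ x : Fin n, A (i.succAbove j) (i.succAbove x) * B (i.succAbove x) i := by
            rw [Finset.mul_sum]; congr 1; ext x; ring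
        _ = - (A (i.succAbove j) i * B i (i.succAbove k)) := by
            rw [e3]; field_simp
    rw [this]
    linarith [h2]
  exact ⟨Matrix.isUnit_det_of_right_inverse key, Matrix.inv_eq_right_inv key⟩
end
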